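/- Let p, q, m be positive integers with p ≥ 2, let n = p + q + m, and let i be an integer with 1 < i ≤ p. Let A = (C_p ⊕ C_q ⊕ C_m) + T(1, p+q, i, p+q+m), viewed as a matrix over ℚ. Then A has finite multiplicative order if and only if both gcd(p,q) and gcd(p,m) divide i−1. In this case the multiplicative order of A is lcm(p,q,m) and A is similar over ℚ to the permutation matrix C_p ⊕ C_q ⊕ C_m. -/

import Mathlib

open Polynomial

/-- `Ccyc k` is the `k × k` companion matrix of `x^k - 1`: the permutation matrix with `1`
in (1-based) positions `(i+1, i)` for `1 ≤ i ≤ k-1` and in position `(1, k)`. -/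
def Ccyc (k : ℕ) : Matrix (Fin k) (Fin k) ℚ :=
  Matrix.of fun r c => if (r : ℕ) = ((c : ℕ) + 1) % k then 1 else 0

/-- `Tblock n i1 j1 i2 j2` is the `n × n` matrix with entry `1` in (1-based) positions
`(i1, j1)` and `(i2, j2)`, entry `-1` in positions `(i1, j2)` and `(i2, j1)`, and `0`
elsewhere. -/
def Tblock (n i1 j1 i2 j2 : ℕ) : Matrix (Fin n) (Fin n) ℚ :=
  Matrix.of fun r c =>
    (if (r : ℕ) + 1 = i1 ∧ (c : ℕ) + 1 = j1 then (1 : ℚ) else 0)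
      + (if (r : ℕ) + 1 = i2 ∧ (c : ℕ) + 1 = j2 then (1 : ℚ) else 0)
      - (if (r : ℕ) + 1 = i1 ∧ (c : ℕ) + 1 = j2 then (1 : ℚ) else 0)
      - (if (r : ℕ) + 1 = i2 ∧ (c : ℕ) + 1 = j1 then (1 : ℚ) else 0)

/-- Matrix direct sum (block diagonal sum), realized on `Fin (p + q)`. -/
def dsum {p q : ℕ} (A : Matrix (Fin p) (Fin p) ℚ) (B : Matrix (Fin q) (Fin q) ℚ) :
    Matrix (Fin (p + q)) (Fin (p + q)) ℚ :=
  Matrix.reindex finSumFinEquiv finSumFinEquiv (Matrix.fromBlocks A 0 0 B)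

/-- A square rational matrix has finite multiplicative order if `A ^ t = 1` for some `t > 0`. -/
def HasFinOrder {n : ℕ} (A : Matrix (Fin n) (Fin n) ℚ) : Prop :=
  ∃ t : ℕ, 0 < t ∧ A ^ t = 1

/-- `OrderIs A t` : `t` is the least positive integer with `A ^ t = 1`. -/
def OrderIs {n : ℕ} (A : Matrix (Fin n) (Fin n) ℚ) (t : ℕ) : Prop :=
  IsLeast {s : ℕ | 0 < s ∧ A ^ s = 1} t

/-- Alternating sign matrix: entries in `{0, 1, -1}`, all partial row- and column-sums equal
`0` or `1`, and every full row and column sums to `1`. -/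
def IsASM {n : ℕ} (A : Matrix (Fin n) (Fin n) ℚ) : Prop :=
  (∀ i j : Fin n, A i j = 0 ∨ A i j = 1 ∨ A i j = -1) ∧
  (∀ i k : Fin n, (∑ j ∈ Finset.Iic k, A i j) = 0 ∨ (∑ j ∈ Finset.Iic k, A i j) = 1) ∧
  (∀ j k : Fin n, (∑ i ∈ Finset.Iic k, A i j) = 0 ∨ (∑ i ∈ Finset.Iic k, A i j) = 1) ∧
  (∀ i : Fin n, (∑ j, A i j) = 1) ∧
  (∀ j : Fin n, (∑ i, A i j) = 1)

/-- Permutation matrix. -/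
def IsPermMat {n : ℕ} (A : Matrix (Fin n) (Fin n) ℚ) : Prop :=
  ∃ σ : Equiv.Perm (Fin n), ∀ i j, A i j = if σ i = j then 1 else 0

/-- `A` is permutation similar to an alternating sign matrix:
`Pᵀ * A * P` is an ASM for some permutation matrix `P`. -/
def PermSimilarToASM {n : ℕ} (A : Matrix (Fin n) (Fin n) ℚ) : Prop :=
  ∃ P B : Matrix (Fin n) (Fin n) ℚ, IsPermMat P ∧ IsASM B ∧ B = P.transpose * A * P

/-- Similarity over `ℚ`. -/
def SimilarQ {n : ℕ} (A B : Matrix (Fin n) (Fin n) ℚ) : Prop :=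
  ∃ S : Matrix (Fin n) (Fin n) ℚ, IsUnit S ∧ B = S⁻¹ * A * S

/-- A `T`-block: a matrix of the form `± T(i1, j1, i2, j2)` with `i1 ≠ i2`, `j1 ≠ j2`. -/
def IsTBlock {n : ℕ} (M : Matrix (Fin n) (Fin n) ℚ) : Prop :=
  ∃ i1 j1 i2 j2 : ℕ, 1 ≤ i1 ∧ i1 ≤ n ∧ 1 ≤ j1 ∧ j1 ≤ n ∧ 1 ≤ i2 ∧ i2 ≤ n ∧ 1 ≤ j2 ∧ j2 ≤ n ∧
    i1 ≠ i2 ∧ j1 ≠ j2 ∧ (M = Tblock n i1 j1 i2 j2 ∨ M = -Tblock n i1 j1 i2 j2)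

namespace Stmt4Aux
open Matrix Finset

lemma finSumFinEquiv_symm_eval {a b : ℕ} (r : Fin (a+b)) :
    finSumFinEquiv.symm r = if h : (r:ℕ) < a then Sum.inl (⟨r, h⟩ : Fin a)
      else Sum.inr (⟨(r:ℕ)-a, by omega⟩ : Fin b) := by
  rcases lt_or_ge (r:ℕ) a with h | h
  · rw [dif_pos h, Equiv.symm_apply_eq, finSumFinEquiv_apply_left]
    exact (Fin.ext rfl).symm
  · rw [dif_neg (by omega), Equiv.symm_apply_eq, finSumFinEquiv_apply_right]
    apply Fin.ext
    simp [Fin.natAdd]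
    omega

lemma dsum_apply {a b : ℕ} (A : Matrix (Fin a) (Fin a) ℚ) (B : Matrix (Fin b) (Fin b) ℚ)
    (r c : Fin (a+b)) :
    dsum A B r c = if h : (r:ℕ) < a ∧ (c:ℕ) < a then A ⟨r, h.1⟩ ⟨c, h.2⟩
      else if h' : a ≤ (r:ℕ) ∧ a ≤ (c:ℕ) then
        B ⟨(r:ℕ)-a, by omega⟩ ⟨(c:ℕ)-a, by omega⟩ else 0 := by
  rw [dsum, Matrix.reindex_apply, Matrix.submatrix_apply,
    finSumFinEquiv_symm_eval, finSumFinEquiv_symm_eval]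
  rcases lt_or_ge (r:ℕ) a with h1 | h1 <;> rcases lt_or_ge (c:ℕ) a with h2 | h2
  · rw [dif_pos h1, dif_pos h2, dif_pos ⟨h1, h2⟩]; rfl
  · rw [dif_pos h1, dif_neg (by omega), dif_neg (by omega), dif_neg (by omega)]; rfl
  · rw [dif_neg (by omega), dif_pos h2, dif_neg (by omega), dif_neg (by omega)]; rfl
  · rw [dif_neg (by omega), dif_neg (by omega), dif_neg (by omega), dif_pos ⟨h1, h2⟩]; rfl



/-- block-shift relation: entry (r,c) of the s-th power of the block cyclic shift is 1 -/
def SR (p q m s r c : ℕ) : Prop :=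
  (r < p ∧ c < p ∧ r = (c+s) % p) ∨
  (p ≤ r ∧ r < p+q ∧ p ≤ c ∧ c < p+q ∧ r-p = (c-p+s) % q) ∨
  (p+q ≤ r ∧ p+q ≤ c ∧ r-(p+q) = (c-(p+q)+s) % m)

instance (p q m s r c : ℕ) : Decidable (SR p q m s r c) := by unfold SR; exact inferInstance

def CC (p q m : ℕ) (s : ℕ) : Matrix (Fin (p+q+m)) (Fin (p+q+m)) ℚ :=
  Matrix.of fun r c => if SR p q m s (r:ℕ) (c:ℕ) then 1 else 0

/-- the one-step shift function (on ℕ indices) -/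
def sigmaV (p q m c : ℕ) : ℕ :=
  if c < p then (c+1) % p else if c < p+q then p + (c-p+1) % q else p + q + (c-(p+q)+1) % m

variable {p q m : ℕ} (hp : 0 < p) (hq : 0 < q) (hm : 0 < m)

section
include hp hq hm

lemma sigmaV_lt {c : ℕ} (hc : c < p+q+m) : sigmaV p q m c < p+q+m := by
  unfold sigmaV
  have h1 := Nat.mod_lt (c+1) hp
  have h2 := Nat.mod_lt (c-p+1) hq
  have h3 := Nat.mod_lt (c-(p+q)+1) hm
  split
  · omega
  · split <;> omega

lemma SR_zero {r c : ℕ} (hr : r < p+q+m) (hc : c < p+q+m) :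
    SR p q m 0 r c ↔ r = c := by
  unfold SR
  rcases lt_or_ge c p with h1 | h1
  · have e1 : (c+0) % p = c := by rw [Nat.add_zero]; exact Nat.mod_eq_of_lt h1
    omega
  · rcases lt_or_ge c (p+q) with h2 | h2
    · have e1 : (c-p+0) % q = c-p := by rw [Nat.add_zero]; exact Nat.mod_eq_of_lt (by omega)
      omega
    · have e1 : (c-(p+q)+0) % m = c-(p+q) := by
        rw [Nat.add_zero]; exact Nat.mod_eq_of_lt (by omega)
      omega

lemma SR_one {k c : ℕ} (hk : k < p+q+m) (hc : c < p+q+m) :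
    SR p q m 1 k c ↔ k = sigmaV p q m c := by
  unfold SR sigmaV
  rcases lt_or_ge c p with h1 | h1
  · have e1 := Nat.mod_lt (c+1) hp
    simp only [if_pos h1]
    omega
  · rcases lt_or_ge c (p+q) with h2 | h2
    · have e1 := Nat.mod_lt (c-p+1) hq
      simp only [if_neg (by omega : ¬ c < p), if_pos h2]
      omega
    · have e1 := Nat.mod_lt (c-(p+q)+1) hm
      simp only [if_neg (by omega : ¬ c < p), if_neg (by omega : ¬ c < p+q)]
      omega

lemma SR_shift {s r c : ℕ} (hr : r < p+q+m) (hc : c < p+q+m) :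
    SR p q m s r (sigmaV p q m c) ↔ SR p q m (s+1) r c := by
  unfold SR sigmaV
  rcases lt_or_ge c p with h1 | h1
  · have e0 := Nat.mod_lt (c+1) hp
    have e1 : ((c+1) % p + s) % p = (c+(s+1)) % p := by rw [Nat.mod_add_mod]; ring_nf
    have e2 := Nat.mod_lt (c+(s+1)) hp
    simp only [if_pos h1]
    omega
  · rcases lt_or_ge c (p+q) with h2 | h2
    · have e0 := Nat.mod_lt (c-p+1) hq
      have e1 : (p + (c-p+1) % q - p + s) % q = (c-p+(s+1)) % q := by
        have : p + (c-p+1) % q - p = (c-p+1) % q := by omega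
        rw [this, Nat.mod_add_mod]; ring_nf
      have e2 := Nat.mod_lt (c-p+(s+1)) hq
      simp only [if_neg (by omega : ¬ c < p), if_pos h2]
      omega
    · have e0 := Nat.mod_lt (c-(p+q)+1) hm
      have e1 : (p + q + (c-(p+q)+1) % m - (p+q) + s) % m = (c-(p+q)+(s+1)) % m := by
        have : p + q + (c-(p+q)+1) % m - (p+q) = (c-(p+q)+1) % m := by omega
        rw [this, Nat.mod_add_mod]; ring_nf
      have e2 := Nat.mod_lt (c-(p+q)+(s+1)) hm
      simp only [if_neg (by omega : ¬ c < p), if_neg (by omega : ¬ c < p+q)]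
      omega

lemma CC_zero : CC p q m 0 = 1 := by
  ext r c
  rw [CC, Matrix.of_apply, Matrix.one_apply, if_congr (SR_zero hp hq hm r.isLt c.isLt) rfl rfl]
  simp [Fin.ext_iff]

lemma CC_step (s : ℕ) : CC p q m s * CC p q m 1 = CC p q m (s+1) := by
  ext r c
  rw [Matrix.mul_apply]
  have hσ : sigmaV p q m (c:ℕ) < p+q+m := sigmaV_lt hp hq hm c.isLt
  have key : ∀ k : Fin (p+q+m), CC p q m s r k * CC p q m 1 k c
      = if k = (⟨sigmaV p q m (c:ℕ), hσ⟩ : Fin (p+q+m)) then CC p q m s r ⟨sigmaV p q m (c:ℕ), hσ⟩ else 0 := by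
    intro k
    have h1 : CC p q m 1 k c = if k = (⟨sigmaV p q m (c:ℕ), hσ⟩ : Fin (p+q+m)) then 1 else 0 := by
      rw [CC, Matrix.of_apply, if_congr (SR_one hp hq hm k.isLt c.isLt) rfl rfl]
      simp [Fin.ext_iff]
    rw [h1]
    by_cases hk : k = (⟨sigmaV p q m (c:ℕ), hσ⟩ : Fin (p+q+m))
    · rw [if_pos hk, if_pos hk, hk, mul_one]
    · rw [if_neg hk, if_neg hk, mul_zero]
  simp only [key]
  rw [Finset.sum_ite_eq' Finset.univ, if_pos (Finset.mem_univ _)]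
  show (if SR p q m s (r:ℕ) (sigmaV p q m (c:ℕ)) then (1:ℚ) else 0) = _
  rw [if_congr (SR_shift hp hq hm r.isLt c.isLt) rfl rfl]
  rfl

lemma CC_pow (s : ℕ) : (CC p q m 1) ^ s = CC p q m s := by
  induction s with
  | zero => rw [pow_zero, CC_zero hp hq hm]
  | succ s ih => rw [pow_succ, ih, CC_step hp hq hm]

end



include hp hq hm in
lemma dsum_eq_CC : dsum (dsum (Ccyc p) (Ccyc q)) (Ccyc m) = CC p q m 1 := by
  ext r c
  have hr := r.isLt
  have hc := c.isLt
  rw [dsum_apply]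
  show _ = if SR p q m 1 (r:ℕ) (c:ℕ) then (1:ℚ) else 0
  rcases lt_or_ge (r:ℕ) (p+q) with h1 | h1 <;> rcases lt_or_ge (c:ℕ) (p+q) with h2 | h2
  · rw [dif_pos ⟨h1, h2⟩, dsum_apply]
    rcases lt_or_ge (r:ℕ) p with h3 | h3 <;> rcases lt_or_ge (c:ℕ) p with h4 | h4
    · rw [dif_pos (show ((⟨(r:ℕ), h1⟩ : Fin (p+q)) : ℕ) < p ∧ ((⟨(c:ℕ), h2⟩ : Fin (p+q)) : ℕ) < p from ⟨h3, h4⟩)]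
      show (if (r:ℕ) = ((c:ℕ)+1) % p then (1:ℚ) else 0) = _
      have hmod := Nat.mod_lt ((c:ℕ)+1) hp
      by_cases h : SR p q m 1 (r:ℕ) (c:ℕ)
      · rw [if_pos h, if_pos (by unfold SR at h; omega)]
      · rw [if_neg h, if_neg (by unfold SR at h; omega)]
    · rw [dif_neg (show ¬(((⟨(r:ℕ), h1⟩ : Fin (p+q)) : ℕ) < p ∧ ((⟨(c:ℕ), h2⟩ : Fin (p+q)) : ℕ) < p) by show ¬((r:ℕ) < p ∧ (c:ℕ) < p); omega),
        dif_neg (show ¬(p ≤ ((⟨(r:ℕ), h1⟩ : Fin (p+q)) : ℕ) ∧ p ≤ ((⟨(c:ℕ), h2⟩ : Fin (p+q)) : ℕ)) by show ¬(p ≤ (r:ℕ) ∧ p ≤ (c:ℕ)); omega)]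
      rw [eq_comm, if_neg]
      unfold SR
      have hmod := Nat.mod_lt ((c:ℕ)-p+1) hq
      omega
    · rw [dif_neg (show ¬(((⟨(r:ℕ), h1⟩ : Fin (p+q)) : ℕ) < p ∧ ((⟨(c:ℕ), h2⟩ : Fin (p+q)) : ℕ) < p) by show ¬((r:ℕ) < p ∧ (c:ℕ) < p); omega),
        dif_neg (show ¬(p ≤ ((⟨(r:ℕ), h1⟩ : Fin (p+q)) : ℕ) ∧ p ≤ ((⟨(c:ℕ), h2⟩ : Fin (p+q)) : ℕ)) by show ¬(p ≤ (r:ℕ) ∧ p ≤ (c:ℕ)); omega)]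
      rw [eq_comm, if_neg]
      unfold SR
      have hmod := Nat.mod_lt ((c:ℕ)+1) hp
      omega
    · rw [dif_neg (show ¬(((⟨(r:ℕ), h1⟩ : Fin (p+q)) : ℕ) < p ∧ ((⟨(c:ℕ), h2⟩ : Fin (p+q)) : ℕ) < p) by show ¬((r:ℕ) < p ∧ (c:ℕ) < p); omega),
        dif_pos (show p ≤ ((⟨(r:ℕ), h1⟩ : Fin (p+q)) : ℕ) ∧ p ≤ ((⟨(c:ℕ), h2⟩ : Fin (p+q)) : ℕ) from ⟨h3, h4⟩)]
      show (if ((r:ℕ)-p) = (((c:ℕ)-p)+1) % q then (1:ℚ) else 0) = _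
      have hmod := Nat.mod_lt ((c:ℕ)-p+1) hq
      by_cases h : SR p q m 1 (r:ℕ) (c:ℕ)
      · rw [if_pos h, if_pos (by unfold SR at h; omega)]
      · rw [if_neg h, if_neg (by unfold SR at h; omega)]
  · rw [dif_neg (by show ¬((r:ℕ) < p+q ∧ (c:ℕ) < p+q); omega),
      dif_neg (by show ¬(p+q ≤ (r:ℕ) ∧ p+q ≤ (c:ℕ)); omega)]
    rw [eq_comm, if_neg]
    unfold SR
    have hmod := Nat.mod_lt ((c:ℕ)-(p+q)+1) hm
    omega
  · rw [dif_neg (by show ¬((r:ℕ) < p+q ∧ (c:ℕ) < p+q); omega),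
      dif_neg (by show ¬(p+q ≤ (r:ℕ) ∧ p+q ≤ (c:ℕ)); omega)]
    rw [eq_comm, if_neg]
    unfold SR
    have h5 := Nat.mod_lt ((c:ℕ)+1) hp
    have h6 := Nat.mod_lt ((c:ℕ)-p+1) hq
    omega
  · rw [dif_neg (by show ¬((r:ℕ) < p+q ∧ (c:ℕ) < p+q); omega),
      dif_pos (show p+q ≤ (r:ℕ) ∧ p+q ≤ (c:ℕ) from ⟨h1, h2⟩)]
    show (if ((r:ℕ)-(p+q)) = (((c:ℕ)-(p+q))+1) % m then (1:ℚ) else 0) = _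
    have hmod := Nat.mod_lt ((c:ℕ)-(p+q)+1) hm
    by_cases h : SR p q m 1 (r:ℕ) (c:ℕ)
    · rw [if_pos h, if_pos (by unfold SR at h; omega)]
    · rw [if_neg h, if_neg (by unfold SR at h; omega)]


def eVec (p q m j : ℕ) : Fin (p+q+m) → ℚ := fun r => if (r:ℕ) = j % p then 1 else 0
def hqVec (p q m j : ℕ) : Fin (p+q+m) → ℚ := fun c => if (c:ℕ) = p + j % q then 1 else 0
def hmVec (p q m j : ℕ) : Fin (p+q+m) → ℚ := fun c => if (c:ℕ) = p + q + j % m then 1 else 0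
def uVec (p q m i : ℕ) : Fin (p+q+m) → ℚ := eVec p q m 0 - eVec p q m (i-1)
def wVec (p q m : ℕ) : Fin (p+q+m) → ℚ := hqVec p q m (q-1) - hmVec p q m (m-1)

def Good (p q m : ℕ) (M : Matrix (Fin (p+q+m)) (Fin (p+q+m)) ℚ) : Prop :=
  ∀ r c : Fin (p+q+m), (p ≤ (r:ℕ) ∨ (c:ℕ) < p) → M r c = 0

variable {i : ℕ}

lemma hqVec_congr {j j' : ℕ} (h : j % q = j' % q) : hqVec p q m j = hqVec p q m j' := by
  funext c; rw [hqVec, hqVec, h]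

lemma hmVec_congr {j j' : ℕ} (h : j % m = j' % m) : hmVec p q m j = hmVec p q m j' := by
  funext c; rw [hmVec, hmVec, h]

lemma eVec_congr {j j' : ℕ} (h : j % p = j' % p) : eVec p q m j = eVec p q m j' := by
  funext c; rw [eVec, eVec, h]

lemma eVec_supp (hp : 0 < p) (j : ℕ) (r : Fin (p+q+m)) (hr : p ≤ (r:ℕ)) :
    eVec p q m j r = 0 := by
  rw [eVec, if_neg]
  have := Nat.mod_lt j hp
  omega

lemma hqVec_supp (j : ℕ) (c : Fin (p+q+m)) (hc : (c:ℕ) < p) : hqVec p q m j c = 0 := by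
  rw [hqVec, if_neg]; omega

lemma hmVec_supp (j : ℕ) (c : Fin (p+q+m)) (hc : (c:ℕ) < p) : hmVec p q m j c = 0 := by
  rw [hmVec, if_neg]; omega

lemma uVec_supp (hp : 0 < p) (r : Fin (p+q+m)) (hr : p ≤ (r:ℕ)) : uVec p q m i r = 0 := by
  rw [uVec, Pi.sub_apply, eVec_supp hp _ _ hr, eVec_supp hp _ _ hr, sub_zero]

lemma wVec_supp (c : Fin (p+q+m)) (hc : (c:ℕ) < p) : wVec p q m c = 0 := by
  rw [wVec, Pi.sub_apply, hqVec_supp _ _ hc, hmVec_supp _ _ hc, sub_zero]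

lemma Tblock_eq (hp : 0 < p) (hq : 0 < q) (hm : 0 < m) (hi1 : 1 < i) (hi2 : i ≤ p) :
    Tblock (p+q+m) 1 (p+q) i (p+q+m) = vecMulVec (uVec p q m i) (wVec p q m) := by
  ext r c
  have hr := r.isLt
  have hc := c.isLt
  have e1 : (i-1) % p = i-1 := Nat.mod_eq_of_lt (by omega)
  have e2 : (q-1) % q = q-1 := Nat.mod_eq_of_lt (by omega)
  have e3 : (m-1) % m = m-1 := Nat.mod_eq_of_lt (by omega)
  have e4 : (0:ℕ) % p = 0 := Nat.zero_mod _
  rw [vecMulVec_apply, uVec, wVec, Pi.sub_apply, Pi.sub_apply, eVec, eVec, hqVec, hmVec,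
    e1, e2, e3, e4]
  show (if (r:ℕ)+1 = 1 ∧ (c:ℕ)+1 = p+q then (1:ℚ) else 0)
      + (if (r:ℕ)+1 = i ∧ (c:ℕ)+1 = p+q+m then (1:ℚ) else 0)
      - (if (r:ℕ)+1 = 1 ∧ (c:ℕ)+1 = p+q+m then (1:ℚ) else 0)
      - (if (r:ℕ)+1 = i ∧ (c:ℕ)+1 = p+q then (1:ℚ) else 0) = _
  split_ifs <;> first | omega | norm_num

lemma SR_cross {s r c : ℕ} (h : SR p q m s r c) : r < p ↔ c < p := by
  unfold SR at h; omega

lemma CC_cross {s : ℕ} {r c : Fin (p+q+m)} (h : ¬ ((r:ℕ) < p ↔ (c:ℕ) < p)) :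
    CC p q m s r c = 0 := by
  rw [CC, Matrix.of_apply, if_neg]
  intro hs
  exact h (SR_cross hs)

lemma good_mul {M M' : Matrix (Fin (p+q+m)) (Fin (p+q+m)) ℚ}
    (h : Good p q m M) (h' : Good p q m M') : M * M' = 0 := by
  ext r c
  rw [Matrix.mul_apply, Matrix.zero_apply]
  apply Finset.sum_eq_zero
  intro k _
  rcases lt_or_ge (k:ℕ) p with hk | hk
  · rw [h r k (Or.inr hk), zero_mul]
  · rw [h' k c (Or.inl hk), mul_zero]

lemma good_mul_CC {M M' : Matrix (Fin (p+q+m)) (Fin (p+q+m)) ℚ} (s : ℕ)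
    (h : Good p q m M) (h' : Good p q m M') : M * CC p q m s * M' = 0 := by
  ext r c
  rw [Matrix.mul_apply, Matrix.zero_apply]
  apply Finset.sum_eq_zero
  intro k _
  rcases lt_or_ge (k:ℕ) p with hk | hk
  · rw [Matrix.mul_apply]
    have hz : ∀ j ∈ Finset.univ, M r j * CC p q m s j k = 0 := by
      intro j _
      rcases lt_or_ge (j:ℕ) p with hj | hj
      · rw [h r j (Or.inr hj), zero_mul]
      · rw [CC_cross (by omega), mul_zero]
    rw [Finset.sum_eq_zero hz, zero_mul]
  · rw [h' k c (Or.inl hk), mul_zero]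

lemma good_CC_left {M : Matrix (Fin (p+q+m)) (Fin (p+q+m)) ℚ} (s : ℕ)
    (h : Good p q m M) : Good p q m (CC p q m s * M) := by
  intro r c hrc
  rw [Matrix.mul_apply]
  apply Finset.sum_eq_zero
  intro k _
  rcases hrc with hr | hc
  · rcases lt_or_ge (k:ℕ) p with hk | hk
    · rw [CC_cross (by omega), zero_mul]
    · rw [h k c (Or.inl hk), mul_zero]
  · rw [h k c (Or.inr hc), mul_zero]

lemma good_CC_right {M : Matrix (Fin (p+q+m)) (Fin (p+q+m)) ℚ} (s : ℕ)
    (h : Good p q m M) : Good p q m (M * CC p q m s) := by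
  intro r c hrc
  rw [Matrix.mul_apply]
  apply Finset.sum_eq_zero
  intro k _
  rcases hrc with hr | hc
  · rw [h r k (Or.inl hr), zero_mul]
  · rcases lt_or_ge (k:ℕ) p with hk | hk
    · rw [h r k (Or.inr hk), zero_mul]
    · rw [CC_cross (by omega), mul_zero]

lemma good_vmv {u w : Fin (p+q+m) → ℚ} (hu : ∀ r : Fin (p+q+m), p ≤ (r:ℕ) → u r = 0)
    (hw : ∀ c : Fin (p+q+m), (c:ℕ) < p → w c = 0) : Good p q m (vecMulVec u w) := by
  intro r c hrc
  rw [vecMulVec_apply]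
  rcases hrc with hr | hc
  · rw [hu r hr, zero_mul]
  · rw [hw c hc, mul_zero]

lemma good_sub {M M' : Matrix (Fin (p+q+m)) (Fin (p+q+m)) ℚ}
    (h : Good p q m M) (h' : Good p q m M') : Good p q m (M - M') := by
  intro r c hrc
  rw [Matrix.sub_apply, h r c hrc, h' r c hrc, sub_zero]

lemma good_sum {s : Finset ℕ} {f : ℕ → Matrix (Fin (p+q+m)) (Fin (p+q+m)) ℚ}
    (h : ∀ b ∈ s, Good p q m (f b)) : Good p q m (∑ b ∈ s, f b) := by
  intro r c hrc
  rw [Matrix.sum_apply]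
  exact Finset.sum_eq_zero fun b hb => h b hb r c hrc

lemma CC_one_iff (hp : 0 < p) (hq : 0 < q) (hm : 0 < m) (t : ℕ) :
    CC p q m t = 1 ↔ (p ∣ t ∧ q ∣ t ∧ m ∣ t) := by
  constructor
  · intro h
    refine ⟨?_, ?_, ?_⟩
    · have h0 : CC p q m t ⟨0, by omega⟩ ⟨0, by omega⟩ = 1 := by
        rw [h]; exact Matrix.one_apply_eq _
      rw [CC, Matrix.of_apply] at h0
      by_cases hs : SR p q m t 0 0
      · rcases hs with ⟨_, _, h3⟩ | ⟨h1, _⟩ | ⟨h1, _⟩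
        · rw [Nat.zero_add] at h3
          exact Nat.dvd_of_mod_eq_zero h3.symm
        · omega
        · omega
      · rw [if_neg hs] at h0; norm_num at h0
    · have h0 : CC p q m t ⟨p, by omega⟩ ⟨p, by omega⟩ = 1 := by
        rw [h]; exact Matrix.one_apply_eq _
      rw [CC, Matrix.of_apply] at h0
      by_cases hs : SR p q m t p p
      · rcases hs with ⟨h1, _⟩ | ⟨_, _, _, _, h5⟩ | ⟨h1, _⟩
        · omega
        · have e : p - p = 0 := by omega
          rw [e, Nat.zero_add] at h5
          exact Nat.dvd_of_mod_eq_zero h5.symm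
        · omega
      · rw [if_neg hs] at h0; norm_num at h0
    · have h0 : CC p q m t ⟨p+q, by omega⟩ ⟨p+q, by omega⟩ = 1 := by
        rw [h]; exact Matrix.one_apply_eq _
      rw [CC, Matrix.of_apply] at h0
      by_cases hs : SR p q m t (p+q) (p+q)
      · rcases hs with ⟨h1, _⟩ | ⟨_, h2, _⟩ | ⟨_, _, h3⟩
        · omega
        · omega
        · have e : p + q - (p+q) = 0 := by omega
          rw [e, Nat.zero_add] at h3
          exact Nat.dvd_of_mod_eq_zero h3.symm
      · rw [if_neg hs] at h0; norm_num at h0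
  · rintro ⟨⟨a, rfl⟩, hqd, hmd⟩
    obtain ⟨b, hb⟩ := hqd
    obtain ⟨d, hd⟩ := hmd
    ext r c
    rw [CC, Matrix.of_apply, Matrix.one_apply]
    have f1 : ((c:ℕ) + p * a) % p = (c:ℕ) % p := Nat.add_mul_mod_self_left _ _ _
    have f2 : ((c:ℕ) - p + p * a) % q = ((c:ℕ)-p) % q := by
      rw [hb]; exact Nat.add_mul_mod_self_left _ _ _
    have f3 : ((c:ℕ) - (p+q) + p * a) % m = ((c:ℕ)-(p+q)) % m := by
      rw [hd]; exact Nat.add_mul_mod_self_left _ _ _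
    have g1 : (c:ℕ) % p < p := Nat.mod_lt _ hp
    have g2 : ((c:ℕ)-p) % q < q := Nat.mod_lt _ hq
    have g3 : ((c:ℕ)-(p+q)) % m < m := Nat.mod_lt _ hm
    have g4 : (c:ℕ) < p → (c:ℕ) % p = (c:ℕ) := fun h => Nat.mod_eq_of_lt h
    have g5 : (c:ℕ) < p + q → ((c:ℕ)-p) % q = (c:ℕ)-p := fun h => Nat.mod_eq_of_lt (by omega)
    have hc := c.isLt
    have g6 : ((c:ℕ)-(p+q)) % m = (c:ℕ)-(p+q) := Nat.mod_eq_of_lt (by omega)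
    have hfin : r = c ↔ (r:ℕ) = (c:ℕ) := Fin.ext_iff
    by_cases hrc : r = c
    · rw [if_pos, if_pos hrc]
      unfold SR
      omega
    · rw [if_neg, if_neg hrc]
      unfold SR
      omega

lemma bezout (hp : 0 < p) (N : ℕ) (hN : 0 < N) :
    ∃ a c : ℕ, 1 ≤ a ∧ a * N = Nat.gcd p N + c * p := by
  have hgd := Nat.gcd_eq_gcd_ab p N
  set A := Nat.gcdA p N with hA
  set B := Nat.gcdB p N with hB
  set k : ℤ := (B.natAbs + 1 : ℤ) with hk
  have habs : -(B.natAbs : ℤ) ≤ B := by omega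
  have ha' : 1 ≤ B + k * p := by
    have h1 : (1:ℤ) ≤ p := by exact_mod_cast hp
    have h2 : (0:ℤ) ≤ (B.natAbs : ℤ) + 1 := by positivity
    nlinarith
  have key : (B + k * p) * N = Nat.gcd p N + (k * N - A) * p := by
    linear_combination -hgd
  have hgle : (Nat.gcd p N : ℤ) ≤ N := by
    exact_mod_cast Nat.le_of_dvd hN (Nat.gcd_dvd_right p N)
  have hNpos : (1:ℤ) ≤ N := by exact_mod_cast hN
  have hc' : 0 ≤ k * N - A := by
    by_contra hcon
    push_neg at hcon
    have hp1 : (1:ℤ) ≤ p := by exact_mod_cast hp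
    nlinarith
  refine ⟨(B + k * p).toNat, (k * N - A).toNat, ?_, ?_⟩
  · omega
  · have e1 : ((B + k * p).toNat : ℤ) = B + k * p := Int.toNat_of_nonneg (by omega)
    have e2 : (((k * N - A)).toNat : ℤ) = k * N - A := Int.toNat_of_nonneg hc'
    have : ((B + k*p).toNat : ℤ) * N = Nat.gcd p N + ((k*N - A).toNat : ℤ) * p := by
      rw [e1, e2]; exact key
    exact_mod_cast this


lemma mul_vmv {N : ℕ} (M : Matrix (Fin N) (Fin N) ℚ) (u w : Fin N → ℚ) :
    M * vecMulVec u w = vecMulVec (M *ᵥ u) w := by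
  ext r c
  rw [Matrix.mul_apply, vecMulVec_apply, Matrix.mulVec, dotProduct, Finset.sum_mul]
  exact Finset.sum_congr rfl fun k _ => by rw [vecMulVec_apply]; ring

lemma vmv_mul {N : ℕ} (M : Matrix (Fin N) (Fin N) ℚ) (u w : Fin N → ℚ) :
    vecMulVec u w * M = vecMulVec u (w ᵥ* M) := by
  ext r c
  rw [Matrix.mul_apply, vecMulVec_apply, Matrix.vecMul, dotProduct, Finset.mul_sum]
  exact Finset.sum_congr rfl fun k _ => by rw [vecMulVec_apply]; ring

lemma vmv_mul_vmv {N : ℕ} (u w u' w' : Fin N → ℚ) :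
    vecMulVec u w * vecMulVec u' w' = (w ⬝ᵥ u') • vecMulVec u w' := by
  ext r c
  rw [Matrix.mul_apply, Matrix.smul_apply, vecMulVec_apply, dotProduct, smul_eq_mul,
    Finset.sum_mul]
  exact Finset.sum_congr rfl fun k _ => by rw [vecMulVec_apply, vecMulVec_apply]; ring

lemma vmv_sub_left {N : ℕ} (u u' w : Fin N → ℚ) :
    vecMulVec (u - u') w = vecMulVec u w - vecMulVec u' w := by
  ext r c; simp [vecMulVec_apply]; ring

lemma vmv_sub_right {N : ℕ} (u w w' : Fin N → ℚ) :
    vecMulVec u (w - w') = vecMulVec u w - vecMulVec u w' := by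
  ext r c; simp [vecMulVec_apply]; ring


section
include hp hq hm

lemma CC_mulVec_eVec (s j : ℕ) : CC p q m s *ᵥ eVec p q m j = eVec p q m (j+s) := by
  funext r
  have hjp : j % p < p := Nat.mod_lt _ hp
  have hc0 : j % p < p+q+m := by omega
  rw [Matrix.mulVec, dotProduct]
  rw [Finset.sum_eq_single (⟨j % p, hc0⟩ : Fin (p+q+m))]
  · have he : eVec p q m j ⟨j % p, hc0⟩ = 1 := by rw [eVec, if_pos rfl]
    rw [he, mul_one]
    show (if SR p q m s (r:ℕ) (j % p) then (1:ℚ) else 0) = (if (r:ℕ) = (j+s) % p then 1 else 0)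
    have e1 : (j % p + s) % p = (j+s) % p := Nat.mod_add_mod j p s
    have e2 : (j+s) % p < p := Nat.mod_lt _ hp
    by_cases h : (r:ℕ) = (j+s) % p
    · rw [if_pos h, if_pos (show SR p q m s (r:ℕ) (j % p) from Or.inl ⟨by omega, hjp, by omega⟩)]
    · rw [if_neg h, if_neg]
      unfold SR
      omega
  · intro k _ hk
    have : eVec p q m j k = 0 := by
      rw [eVec, if_neg]; intro hh; exact hk (Fin.ext hh)
    rw [this, mul_zero]
  · intro h; exact absurd (Finset.mem_univ _) h

lemma hqVec_vecMul (s j : ℕ) :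
    hqVec p q m j ᵥ* CC p q m s = hqVec p q m (j + (q-1)*s) := by
  funext c
  have hjq : j % q < q := Nat.mod_lt _ hq
  have hr0 : p + j % q < p+q+m := by omega
  obtain ⟨q', rfl⟩ : ∃ q', q = q'+1 := ⟨q-1, by omega⟩
  simp only [Nat.add_sub_cancel]
  rw [Matrix.vecMul, dotProduct]
  rw [Finset.sum_eq_single (⟨p + j % (q'+1), hr0⟩ : Fin (p+(q'+1)+m))]
  · have he : hqVec p (q'+1) m j ⟨p + j % (q'+1), hr0⟩ = 1 := by rw [hqVec, if_pos rfl]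
    rw [he, one_mul]
    show (if SR p (q'+1) m s (p + j % (q'+1)) (c:ℕ) then (1:ℚ) else 0)
      = (if (c:ℕ) = p + (j + q'*s) % (q'+1) then 1 else 0)
    have e2 : (j + q'*s) % (q'+1) < q'+1 := Nat.mod_lt _ hq
    have e3 : ((j + q'*s) % (q'+1) + s) % (q'+1) = j % (q'+1) := by
      rw [Nat.mod_add_mod]
      have h0 : q'*s + s = (q'+1)*s := by ring
      have h1 : j + q'*s + s = j + (q'+1)*s := by omega
      rw [h1, Nat.add_mul_mod_self_left]
    by_cases h : (c:ℕ) = p + (j + q'*s) % (q'+1)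
    · rw [if_pos h, if_pos (show SR p (q'+1) m s (p + j % (q'+1)) (c:ℕ) from
        Or.inr (Or.inl ⟨by omega, by omega, by omega, by omega, by
          have hc : (c:ℕ) - p = (j + q'*s) % (q'+1) := by omega
          rw [hc, e3]; omega⟩))]
    · rw [if_neg h, if_neg]
      rintro (⟨a1, _, _⟩ | ⟨a1, a2, a3, a4, a5⟩ | ⟨a1, a2, _⟩)
      · omega
      · apply h
        have h1 : ((c:ℕ)-p+s) % (q'+1) = j % (q'+1) := by omega
        have h2 : ((c:ℕ)-p+s) + q'*s ≡ j + q'*s [MOD q'+1] := Nat.ModEq.add_right _ h1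
        have h0 : s + q'*s = (q'+1)*s := by ring
        have h3 : (c:ℕ)-p+s+q'*s = (c:ℕ)-p + (q'+1)*s := by omega
        rw [h3] at h2
        have h4 : ((c:ℕ)-p + (q'+1)*s) % (q'+1) = ((c:ℕ)-p) % (q'+1) :=
          Nat.add_mul_mod_self_left _ _ _
        have h5 : ((c:ℕ)-p) % (q'+1) = (c:ℕ)-p := Nat.mod_eq_of_lt (by omega)
        unfold Nat.ModEq at h2
        omega
      · omega
  · intro k _ hk
    have : hqVec p (q'+1) m j k = 0 := by
      rw [hqVec, if_neg]; intro hh; exact hk (Fin.ext hh)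
    rw [this, zero_mul]
  · intro h; exact absurd (Finset.mem_univ _) h

lemma hmVec_vecMul (s j : ℕ) :
    hmVec p q m j ᵥ* CC p q m s = hmVec p q m (j + (m-1)*s) := by
  funext c
  have hjm : j % m < m := Nat.mod_lt _ hm
  have hr0 : p + q + j % m < p+q+m := by omega
  obtain ⟨m', rfl⟩ : ∃ m', m = m'+1 := ⟨m-1, by omega⟩
  simp only [Nat.add_sub_cancel]
  rw [Matrix.vecMul, dotProduct]
  rw [Finset.sum_eq_single (⟨p + q + j % (m'+1), hr0⟩ : Fin (p+q+(m'+1)))]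
  · have he : hmVec p q (m'+1) j ⟨p + q + j % (m'+1), hr0⟩ = 1 := by rw [hmVec, if_pos rfl]
    rw [he, one_mul]
    show (if SR p q (m'+1) s (p + q + j % (m'+1)) (c:ℕ) then (1:ℚ) else 0)
      = (if (c:ℕ) = p + q + (j + m'*s) % (m'+1) then 1 else 0)
    have e2 : (j + m'*s) % (m'+1) < m'+1 := Nat.mod_lt _ hm
    have e3 : ((j + m'*s) % (m'+1) + s) % (m'+1) = j % (m'+1) := by
      rw [Nat.mod_add_mod]
      have h0 : m'*s + s = (m'+1)*s := by ring
      have h1 : j + m'*s + s = j + (m'+1)*s := by omega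
      rw [h1, Nat.add_mul_mod_self_left]
    by_cases h : (c:ℕ) = p + q + (j + m'*s) % (m'+1)
    · rw [if_pos h, if_pos (show SR p q (m'+1) s (p + q + j % (m'+1)) (c:ℕ) from
        Or.inr (Or.inr ⟨by omega, by omega, by
          have hc : (c:ℕ) - (p+q) = (j + m'*s) % (m'+1) := by omega
          rw [hc, e3]; omega⟩))]
    · rw [if_neg h, if_neg]
      rintro (⟨a1, _, _⟩ | ⟨a1, a2, a3, a4, a5⟩ | ⟨a1, a2, a3⟩)
      · omega
      · omega
      · apply h
        have h1 : ((c:ℕ)-(p+q)+s) % (m'+1) = j % (m'+1) := by omega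
        have h2 : ((c:ℕ)-(p+q)+s) + m'*s ≡ j + m'*s [MOD m'+1] := Nat.ModEq.add_right _ h1
        have h0 : s + m'*s = (m'+1)*s := by ring
        have h3 : (c:ℕ)-(p+q)+s+m'*s = (c:ℕ)-(p+q) + (m'+1)*s := by omega
        rw [h3] at h2
        have h4 : ((c:ℕ)-(p+q) + (m'+1)*s) % (m'+1) = ((c:ℕ)-(p+q)) % (m'+1) :=
          Nat.add_mul_mod_self_left _ _ _
        have h5 : ((c:ℕ)-(p+q)) % (m'+1) = (c:ℕ)-(p+q) := Nat.mod_eq_of_lt (by omega)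
        unfold Nat.ModEq at h2
        omega
  · intro k _ hk
    have : hmVec p q (m'+1) j k = 0 := by
      rw [hmVec, if_neg]; intro hh; exact hk (Fin.ext hh)
    rw [this, zero_mul]
  · intro h; exact absurd (Finset.mem_univ _) h

end



-- ===================== part 6 =====================

def TT (p q m i : ℕ) : Matrix (Fin (p+q+m)) (Fin (p+q+m)) ℚ :=
  vecMulVec (uVec p q m i) (wVec p q m)

def EE (p q m i t : ℕ) : Matrix (Fin (p+q+m)) (Fin (p+q+m)) ℚ :=
  ∑ b ∈ Finset.range t, CC p q m (t-1-b) * TT p q m i * CC p q m b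

lemma supp_mulVec {x : Fin (p+q+m) → ℚ} (hx : ∀ r : Fin (p+q+m), p ≤ (r:ℕ) → x r = 0)
    (s : ℕ) : ∀ r : Fin (p+q+m), p ≤ (r:ℕ) → (CC p q m s *ᵥ x) r = 0 := by
  intro r hr
  rw [Matrix.mulVec, dotProduct]
  apply Finset.sum_eq_zero
  intro k _
  rcases lt_or_ge (k:ℕ) p with hk | hk
  · rw [CC_cross (by omega), zero_mul]
  · rw [hx k hk, mul_zero]

lemma supp_vecMul {w : Fin (p+q+m) → ℚ} (hw : ∀ c : Fin (p+q+m), (c:ℕ) < p → w c = 0)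
    (s : ℕ) : ∀ c : Fin (p+q+m), (c:ℕ) < p → (w ᵥ* CC p q m s) c = 0 := by
  intro c hc
  rw [Matrix.vecMul, dotProduct]
  apply Finset.sum_eq_zero
  intro k _
  rcases lt_or_ge (k:ℕ) p with hk | hk
  · rw [hw k hk, zero_mul]
  · rw [CC_cross (by omega), mul_zero]

section
include hp hq hm

lemma CC_mul (a b : ℕ) : CC p q m a * CC p q m b = CC p q m (a+b) := by
  rw [← CC_pow hp hq hm a, ← CC_pow hp hq hm b, ← pow_add, CC_pow hp hq hm]

lemma good_TT : Good p q m (TT p q m i) :=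
  good_vmv (fun r hr => uVec_supp hp r hr) (fun c hc => wVec_supp c hc)

lemma TT_mid (s : ℕ) : TT p q m i * CC p q m s * TT p q m i = 0 :=
  good_mul_CC s (good_TT hp hq hm) (good_TT hp hq hm)

lemma good_EE (t : ℕ) : Good p q m (EE p q m i t) := by
  apply good_sum
  intro b _
  exact good_CC_right _ (good_CC_left _ (good_TT hp hq hm))

lemma A_pow (t : ℕ) : (CC p q m 1 + TT p q m i) ^ t = CC p q m t + EE p q m i t := by
  induction t with
  | zero =>
    rw [pow_zero, CC_zero hp hq hm, EE, Finset.range_zero, Finset.sum_empty, add_zero]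
  | succ t ih =>
    rw [pow_succ, ih, add_mul, mul_add, mul_add]
    have h2 : EE p q m i t * TT p q m i = 0 := by
      rw [EE, Finset.sum_mul]
      apply Finset.sum_eq_zero
      intro b _
      rw [mul_assoc (CC p q m (t-1-b) * TT p q m i) (CC p q m b) (TT p q m i),
        mul_assoc (CC p q m (t-1-b)) (TT p q m i) (CC p q m b * TT p q m i),
        ← mul_assoc (TT p q m i) (CC p q m b) (TT p q m i), TT_mid hp hq hm b, mul_zero]
    have h3 : EE p q m i t * CC p q m 1
        = ∑ b ∈ Finset.range t, CC p q m (t-1-b) * TT p q m i * CC p q m (b+1) := by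
      rw [EE, Finset.sum_mul]
      apply Finset.sum_congr rfl
      intro b _
      rw [mul_assoc, CC_mul hp hq hm b 1]
    have h4 : EE p q m i (t+1)
        = ∑ b ∈ Finset.range t, CC p q m (t-1-b) * TT p q m i * CC p q m (b+1)
          + CC p q m t * TT p q m i := by
      rw [EE, Finset.sum_range_succ']
      congr 1
      · apply Finset.sum_congr rfl
        intro b _
        rw [show t+1-1-(b+1) = t-1-b from by omega]
      · rw [show t+1-1-0 = t from by omega, CC_zero hp hq hm, mul_one]
    rw [h2, add_zero, CC_mul hp hq hm t 1, h3, h4]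
    abel

lemma split_pow_one {t : ℕ} (h : (CC p q m 1 + TT p q m i) ^ t = 1) :
    CC p q m t = 1 ∧ EE p q m i t = 0 := by
  have key : CC p q m t + EE p q m i t = 1 := by rw [← A_pow hp hq hm, h]
  have hE : EE p q m i t = 0 := by
    ext r c
    rw [Matrix.zero_apply]
    by_cases hcase : (r:ℕ) < p ∧ p ≤ (c:ℕ)
    · have h1 : CC p q m t r c + EE p q m i t r c
          = (1 : Matrix (Fin (p+q+m)) (Fin (p+q+m)) ℚ) r c := by
        rw [← Matrix.add_apply, key]
      have hcc : CC p q m t r c = 0 := CC_cross (by omega)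
      have h3 : (1 : Matrix (Fin (p+q+m)) (Fin (p+q+m)) ℚ) r c = 0 :=
        Matrix.one_apply_ne (by
          intro hh
          rw [hh] at hcase
          omega)
      rw [hcc, h3, zero_add] at h1
      exact h1
    · exact good_EE hp hq hm t r c (by omega)
  refine ⟨?_, hE⟩
  rw [hE, add_zero] at key
  exact key

lemma EE_term (a b : ℕ) : CC p q m a * TT p q m i * CC p q m b
    = vecMulVec (eVec p q m (0+a) - eVec p q m ((i-1)+a))
        (hqVec p q m ((q-1) + (q-1)*b) - hmVec p q m ((m-1) + (m-1)*b)) := by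
  rw [TT, mul_vmv, vmv_mul, uVec, Matrix.mulVec_sub,
    CC_mulVec_eVec hp hq hm a 0, CC_mulVec_eVec hp hq hm a (i-1),
    wVec, Matrix.sub_vecMul, hqVec_vecMul hp hq hm b (q-1), hmVec_vecMul hp hq hm b (m-1)]

lemma gcd_q_of_EE {t : ℕ} (ht : 0 < t) (hi1 : 1 < i) (hi2 : i ≤ p)
    (hEE : EE p q m i t = 0) : Nat.gcd p q ∣ i - 1 := by
  by_contra hnot
  have hrlt : (t-1) % p < p+q+m := by have := Nat.mod_lt (t-1) hp; omega
  have hclt : p+q-1 < p+q+m := by omega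
  set r : Fin (p+q+m) := ⟨(t-1) % p, hrlt⟩ with hrdef
  set c : Fin (p+q+m) := ⟨p+q-1, hclt⟩ with hcdef
  have h0 : EE p q m i t r c = 0 := by rw [hEE]; rfl
  rw [EE, Matrix.sum_apply] at h0
  set f : ℕ → ℚ := fun b => (CC p q m (t-1-b) * TT p q m i * CC p q m b) r c with hf
  have h0' : ∑ b ∈ Finset.range t, f b = 0 := h0
  have hterm : ∀ b : ℕ, f b = (eVec p q m (0+(t-1-b)) r - eVec p q m ((i-1)+(t-1-b)) r)
      * (hqVec p q m ((q-1)+(q-1)*b) c - hmVec p q m ((m-1)+(m-1)*b) c) := by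
    intro b
    rw [hf]
    simp only []
    rw [EE_term hp hq hm (t-1-b) b, vecMulVec_apply, Pi.sub_apply, Pi.sub_apply]
  have hcval : (c:ℕ) = p+q-1 := rfl
  have hrval : (r:ℕ) = (t-1) % p := rfl
  have hm0 : ∀ b : ℕ, hmVec p q m ((m-1)+(m-1)*b) c = 0 := by
    intro b
    rw [hmVec, if_neg]
    omega
  have hqval : ∀ b : ℕ, q ∣ b → hqVec p q m ((q-1)+(q-1)*b) c = 1 := by
    intro b hb
    obtain ⟨k, rfl⟩ := hb
    have hmod : ((q-1)+(q-1)*(q*k)) % q = q-1 := by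
      rw [show (q-1) + (q-1)*(q*k) = (q-1) + ((q-1)*k)*q from by ring,
        Nat.add_mul_mod_self_right]
      exact Nat.mod_eq_of_lt (by omega)
    rw [hqVec, hmod, if_pos (by omega)]
  have hqdvd : ∀ b : ℕ, hqVec p q m ((q-1)+(q-1)*b) c ≠ 0 → q ∣ b := by
    intro b hb
    rw [hqVec] at hb
    by_cases hcon : (c:ℕ) = p + ((q-1)+(q-1)*b) % q
    · have hlt : ((q-1)+(q-1)*b) % q < q := Nat.mod_lt _ hq
      have h1 : ((q-1)+(q-1)*b) % q = q-1 := by omega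
      have h2 : (q-1) + (q-1)*b ≡ (q-1) + 0 [MOD q] := by
        unfold Nat.ModEq
        rw [Nat.add_zero, h1]
        exact (Nat.mod_eq_of_lt (by omega)).symm
      have h3 : (q-1)*b ≡ 0 [MOD q] := Nat.ModEq.add_left_cancel' (q-1) h2
      have h4 : q ∣ (q-1)*b := Nat.modEq_zero_iff_dvd.mp h3
      obtain ⟨q', rfl⟩ : ∃ q', q = q'+1 := ⟨q-1, by omega⟩
      have hco : Nat.Coprime (q'+1) q' := by
        simp [Nat.Coprime, Nat.succ_sub_one, Nat.gcd_comm]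
      apply Nat.Coprime.dvd_of_dvd_mul_left hco
      simpa using h4
    · rw [if_neg hcon] at hb
      exact absurd rfl hb
  have hY : ∀ b : ℕ, b < t → q ∣ b → eVec p q m ((i-1)+(t-1-b)) r = 0 := by
    intro b hbt hqb
    rw [eVec, if_neg]
    intro hcon
    have h1 : (t-1) ≡ (i-1)+(t-1-b) [MOD p] := by
      unfold Nat.ModEq
      omega
    have h2 : (t-1-b) + b ≡ (t-1-b) + (i-1) [MOD p] := by
      rw [show t-1-b+b = t-1 from by omega, show (t-1-b)+(i-1) = (i-1)+(t-1-b) from by omega]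
      exact h1
    have h3 : b ≡ i-1 [MOD p] := Nat.ModEq.add_left_cancel' _ h2
    have h4 : b ≡ i-1 [MOD Nat.gcd p q] := Nat.ModEq.of_dvd (Nat.gcd_dvd_left p q) h3
    have h5 : Nat.gcd p q ∣ b := dvd_trans (Nat.gcd_dvd_right p q) hqb
    apply hnot
    apply Nat.dvd_of_mod_eq_zero
    obtain ⟨k, rfl⟩ := h5
    unfold Nat.ModEq at h4
    rw [← h4, Nat.mul_mod_right]
  have hnn : ∀ b ∈ Finset.range t, (0:ℚ) ≤ f b := by
    intro b hb
    rw [hterm b, hm0 b, sub_zero]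
    by_cases hqb : q ∣ b
    · rw [hqval b hqb, hY b (Finset.mem_range.mp hb) hqb, sub_zero, mul_one, eVec]
      split <;> norm_num
    · have hz : hqVec p q m ((q-1)+(q-1)*b) c = 0 := by
        by_contra hc0
        exact hqb (hqdvd b hc0)
      rw [hz, mul_zero]
  have hone : f 0 = 1 := by
    have harg : (0+(t-1-0)) = t-1 := by omega
    rw [hterm 0, hm0 0, sub_zero, hqval 0 (dvd_zero q), hY 0 ht (dvd_zero q), sub_zero,
      mul_one, eVec, if_pos (show (r:ℕ) = (0+(t-1-0)) % p from by rw [harg])]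
  have hsum := Finset.single_le_sum hnn (Finset.mem_range.mpr ht)
  rw [hone, h0'] at hsum
  norm_num at hsum

lemma gcd_m_of_EE {t : ℕ} (ht : 0 < t) (hi1 : 1 < i) (hi2 : i ≤ p)
    (hEE : EE p q m i t = 0) : Nat.gcd p m ∣ i - 1 := by
  by_contra hnot
  have hrlt : (t-1) % p < p+q+m := by have := Nat.mod_lt (t-1) hp; omega
  have hclt : p+q+m-1 < p+q+m := by omega
  set r : Fin (p+q+m) := ⟨(t-1) % p, hrlt⟩ with hrdef
  set c : Fin (p+q+m) := ⟨p+q+m-1, hclt⟩ with hcdef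
  have h0 : EE p q m i t r c = 0 := by rw [hEE]; rfl
  rw [EE, Matrix.sum_apply] at h0
  set f : ℕ → ℚ := fun b => (CC p q m (t-1-b) * TT p q m i * CC p q m b) r c with hf
  have h0' : ∑ b ∈ Finset.range t, f b = 0 := h0
  have hterm : ∀ b : ℕ, f b = (eVec p q m (0+(t-1-b)) r - eVec p q m ((i-1)+(t-1-b)) r)
      * (hqVec p q m ((q-1)+(q-1)*b) c - hmVec p q m ((m-1)+(m-1)*b) c) := by
    intro b
    rw [hf]
    simp only []
    rw [EE_term hp hq hm (t-1-b) b, vecMulVec_apply, Pi.sub_apply, Pi.sub_apply]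
  have hcval : (c:ℕ) = p+q+m-1 := rfl
  have hrval : (r:ℕ) = (t-1) % p := rfl
  have hq0 : ∀ b : ℕ, hqVec p q m ((q-1)+(q-1)*b) c = 0 := by
    intro b
    have := Nat.mod_lt ((q-1)+(q-1)*b) hq
    rw [hqVec, if_neg]
    omega
  have hmval : ∀ b : ℕ, m ∣ b → hmVec p q m ((m-1)+(m-1)*b) c = 1 := by
    intro b hb
    obtain ⟨k, rfl⟩ := hb
    have hmod : ((m-1)+(m-1)*(m*k)) % m = m-1 := by
      rw [show (m-1) + (m-1)*(m*k) = (m-1) + ((m-1)*k)*m from by ring,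
        Nat.add_mul_mod_self_right]
      exact Nat.mod_eq_of_lt (by omega)
    rw [hmVec, hmod, if_pos (by omega)]
  have hmdvd : ∀ b : ℕ, hmVec p q m ((m-1)+(m-1)*b) c ≠ 0 → m ∣ b := by
    intro b hb
    rw [hmVec] at hb
    by_cases hcon : (c:ℕ) = p + q + ((m-1)+(m-1)*b) % m
    · have hlt : ((m-1)+(m-1)*b) % m < m := Nat.mod_lt _ hm
      have h1 : ((m-1)+(m-1)*b) % m = m-1 := by omega
      have h2 : (m-1) + (m-1)*b ≡ (m-1) + 0 [MOD m] := by
        unfold Nat.ModEq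
        rw [Nat.add_zero, h1]
        exact (Nat.mod_eq_of_lt (by omega)).symm
      have h3 : (m-1)*b ≡ 0 [MOD m] := Nat.ModEq.add_left_cancel' (m-1) h2
      have h4 : m ∣ (m-1)*b := Nat.modEq_zero_iff_dvd.mp h3
      obtain ⟨m', rfl⟩ : ∃ m', m = m'+1 := ⟨m-1, by omega⟩
      have hco : Nat.Coprime (m'+1) m' := by
        simp [Nat.Coprime, Nat.succ_sub_one, Nat.gcd_comm]
      apply Nat.Coprime.dvd_of_dvd_mul_left hco
      simpa using h4
    · rw [if_neg hcon] at hb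
      exact absurd rfl hb
  have hY : ∀ b : ℕ, b < t → m ∣ b → eVec p q m ((i-1)+(t-1-b)) r = 0 := by
    intro b hbt hmb
    rw [eVec, if_neg]
    intro hcon
    have h1 : (t-1) ≡ (i-1)+(t-1-b) [MOD p] := by
      unfold Nat.ModEq
      omega
    have h2 : (t-1-b) + b ≡ (t-1-b) + (i-1) [MOD p] := by
      rw [show t-1-b+b = t-1 from by omega, show (t-1-b)+(i-1) = (i-1)+(t-1-b) from by omega]
      exact h1
    have h3 : b ≡ i-1 [MOD p] := Nat.ModEq.add_left_cancel' _ h2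
    have h4 : b ≡ i-1 [MOD Nat.gcd p m] := Nat.ModEq.of_dvd (Nat.gcd_dvd_left p m) h3
    have h5 : Nat.gcd p m ∣ b := dvd_trans (Nat.gcd_dvd_right p m) hmb
    apply hnot
    apply Nat.dvd_of_mod_eq_zero
    obtain ⟨k, rfl⟩ := h5
    unfold Nat.ModEq at h4
    rw [← h4, Nat.mul_mod_right]
  have hnn : ∀ b ∈ Finset.range t, (0:ℚ) ≤ -f b := by
    intro b hb
    rw [hterm b, hq0 b, zero_sub, mul_neg, neg_neg]
    by_cases hmb : m ∣ b
    · rw [hmval b hmb, hY b (Finset.mem_range.mp hb) hmb, sub_zero, mul_one, eVec]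
      split <;> norm_num
    · have hz : hmVec p q m ((m-1)+(m-1)*b) c = 0 := by
        by_contra hc0
        exact hmb (hmdvd b hc0)
      rw [hz, mul_zero]
  have hone : -f 0 = 1 := by
    have harg : (0+(t-1-0)) = t-1 := by omega
    rw [hterm 0, hq0 0, zero_sub, mul_neg, neg_neg, hmval 0 (dvd_zero m),
      hY 0 ht (dvd_zero m), sub_zero, mul_one, eVec,
      if_pos (show (r:ℕ) = (0+(t-1-0)) % p from by rw [harg])]
  have hsum := Finset.single_le_sum hnn (Finset.mem_range.mpr ht)
  rw [hone, Finset.sum_neg_distrib, h0', neg_zero] at hsum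
  norm_num at hsum

lemma solve_x (N d e a cc : ℕ) (hac : a * N = d + cc * p) (hde : d * e = i - 1) :
    ∃ x : Fin (p+q+m) → ℚ, (∀ r : Fin (p+q+m), p ≤ (r:ℕ) → x r = 0) ∧
      CC p q m N *ᵥ x - x = uVec p q m i := by
  set g : ℕ → (Fin (p+q+m) → ℚ) := fun j => ∑ l ∈ Finset.range e, eVec p q m (j + l*d)
    with hg
  have hsum_mv : ∀ (v : ℕ → Fin (p+q+m) → ℚ) (s : Finset ℕ),
      CC p q m N *ᵥ (∑ k ∈ s, v k) = ∑ k ∈ s, CC p q m N *ᵥ v k := by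
    intro v s
    simp only [← Matrix.mulVecLin_apply]
    exact map_sum _ _ _
  have hCg : ∀ j, CC p q m N *ᵥ g j = g (j + N) := by
    intro j
    rw [hg]
    simp only []
    rw [hsum_mv]
    apply Finset.sum_congr rfl
    intro l _
    rw [CC_mulVec_eVec hp hq hm]
    exact eVec_congr (by rw [show j + l*d + N = j + N + l*d from by omega])
  set S : Fin (p+q+m) → ℚ := ∑ k ∈ Finset.range a, g (k*N) with hS
  have hx0 : CC p q m N *ᵥ S - S = g (a*N) - g 0 := by
    rw [hS, hsum_mv]
    have h1 : ∑ k ∈ Finset.range a, CC p q m N *ᵥ g (k*N)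
        = ∑ k ∈ Finset.range a, g ((k+1)*N) := by
      apply Finset.sum_congr rfl
      intro k _
      rw [hCg, show k*N + N = (k+1)*N from by ring]
    rw [h1, ← Finset.sum_sub_distrib]
    have h2 := Finset.sum_range_sub (fun k => g (k*N)) a
    rw [Nat.zero_mul] at h2
    exact h2
  have hga : g (a*N) = ∑ l ∈ Finset.range e, eVec p q m ((l+1)*d) := by
    rw [hg]
    simp only []
    apply Finset.sum_congr rfl
    intro l _
    apply eVec_congr
    rw [hac, show d + cc*p + l*d = (l+1)*d + cc*p from by ring, Nat.add_mul_mod_self_right]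
  have hg0 : g 0 = ∑ l ∈ Finset.range e, eVec p q m (l*d) := by
    rw [hg]
    simp only []
    apply Finset.sum_congr rfl
    intro l _
    rw [Nat.zero_add]
  refine ⟨-S, ?_, ?_⟩
  · intro rr hr
    rw [hS, Pi.neg_apply, Finset.sum_apply]
    rw [Finset.sum_eq_zero, neg_zero]
    intro k _
    rw [hg]
    simp only []
    rw [Finset.sum_apply]
    apply Finset.sum_eq_zero
    intro l _
    exact eVec_supp hp _ rr hr
  · rw [Matrix.mulVec_neg]
    have hrearr : -(CC p q m N *ᵥ S) - -S = -(CC p q m N *ᵥ S - S) := by abel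
    rw [hrearr, hx0, neg_sub, hg0, hga, ← Finset.sum_sub_distrib]
    have htele := Finset.sum_range_sub' (fun l => eVec p q m (l*d)) e
    rw [Nat.zero_mul] at htele
    rw [htele, uVec, show e*d = i-1 from by rw [mul_comm]; exact hde]

lemma build_B (N : ℕ) (x : Fin (p+q+m) → ℚ) (hxs : ∀ r : Fin (p+q+m), p ≤ (r:ℕ) → x r = 0)
    (hx : CC p q m N *ᵥ x - x = uVec p q m i)
    (w : Fin (p+q+m) → ℚ) (hws : ∀ c : Fin (p+q+m), (c:ℕ) < p → w c = 0)
    (hwN : w ᵥ* CC p q m N = w) :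
    ∃ B : Matrix (Fin (p+q+m)) (Fin (p+q+m)) ℚ, Good p q m B ∧
      CC p q m 1 * B - B * CC p q m 1 = vecMulVec (uVec p q m i) w := by
  set G : ℕ → Matrix (Fin (p+q+m)) (Fin (p+q+m)) ℚ :=
    fun b => vecMulVec (CC p q m (N-b) *ᵥ x) (w ᵥ* CC p q m b) with hG
  refine ⟨∑ b ∈ Finset.range N, vecMulVec (CC p q m (N-1-b) *ᵥ x) (w ᵥ* CC p q m b), ?_, ?_⟩
  · apply good_sum
    intro b _
    exact good_vmv (supp_mulVec hxs (N-1-b)) (supp_vecMul hws b)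
  · rw [Finset.mul_sum, Finset.sum_mul]
    have hterm1 : ∀ b ∈ Finset.range N,
        CC p q m 1 * vecMulVec (CC p q m (N-1-b) *ᵥ x) (w ᵥ* CC p q m b) = G b := by
      intro b hb
      have hblt := Finset.mem_range.mp hb
      rw [mul_vmv, Matrix.mulVec_mulVec, CC_mul hp hq hm 1 (N-1-b),
        show 1 + (N-1-b) = N-b from by omega, hG]
    have hterm2 : ∀ b ∈ Finset.range N,
        vecMulVec (CC p q m (N-1-b) *ᵥ x) (w ᵥ* CC p q m b) * CC p q m 1 = G (b+1) := by
      intro b hb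
      rw [vmv_mul, Matrix.vecMul_vecMul, CC_mul hp hq hm b 1, hG]
      simp only []
      rw [show N-(b+1) = N-1-b from by omega]
    rw [Finset.sum_congr rfl hterm1, Finset.sum_congr rfl hterm2, ← Finset.sum_sub_distrib,
      Finset.sum_range_sub' G N, hG]
    simp only []
    rw [Nat.sub_zero, Nat.sub_self, CC_zero hp hq hm, Matrix.vecMul_one, Matrix.one_mulVec,
      hwN, ← vmv_sub_left, hx]

end

end Stmt4Aux

open Matrix Stmt4Aux in
theorem stmt4 (p q m : ℕ) (hp : 2 ≤ p) (hq : 1 ≤ q) (hm : 1 ≤ m) (n i : ℕ)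
    (hn : n = p + q + m) (hi1 : 1 < i) (hi2 : i ≤ p)
    (A : Matrix (Fin (p + q + m)) (Fin (p + q + m)) ℚ)
    (hA : A = dsum (dsum (Ccyc p) (Ccyc q)) (Ccyc m)
        + Tblock (p + q + m) 1 (p + q) i (p + q + m)) :
    (HasFinOrder A ↔ (Nat.gcd p q ∣ i - 1 ∧ Nat.gcd p m ∣ i - 1)) ∧
      (HasFinOrder A →
        OrderIs A (Nat.lcm (Nat.lcm p q) m) ∧
          SimilarQ A (dsum (dsum (Ccyc p) (Ccyc q)) (Ccyc m))) := by
  have hp0 : 0 < p := by omega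
  have hq0 : 0 < q := hq
  have hm0 : 0 < m := hm
  have hCeq : dsum (dsum (Ccyc p) (Ccyc q)) (Ccyc m) = CC p q m 1 :=
    dsum_eq_CC hp0 hq0 hm0
  have hTeq : Tblock (p+q+m) 1 (p+q) i (p+q+m) = TT p q m i :=
    Tblock_eq hp0 hq0 hm0 hi1 hi2
  have hA' : A = CC p q m 1 + TT p q m i := by rw [hA, hCeq, hTeq]
  have hLpos : 0 < Nat.lcm (Nat.lcm p q) m :=
    Nat.pos_of_ne_zero (Nat.lcm_ne_zero (Nat.lcm_ne_zero (by omega) (by omega)) (by omega))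
  have hforward : ∀ t : ℕ, 0 < t → A ^ t = 1 →
      (Nat.gcd p q ∣ i-1 ∧ Nat.gcd p m ∣ i-1 ∧ p ∣ t ∧ q ∣ t ∧ m ∣ t) := by
    intro t ht h1
    rw [hA'] at h1
    obtain ⟨hcc, hee⟩ := split_pow_one hp0 hq0 hm0 h1
    obtain ⟨hdp, hdq, hdm⟩ := (CC_one_iff hp0 hq0 hm0 t).mp hcc
    exact ⟨gcd_q_of_EE hp0 hq0 hm0 ht hi1 hi2 hee,
      gcd_m_of_EE hp0 hq0 hm0 ht hi1 hi2 hee, hdp, hdq, hdm⟩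
  have hbackward : (Nat.gcd p q ∣ i-1) → (Nat.gcd p m ∣ i-1) →
      ∃ B : Matrix (Fin (p+q+m)) (Fin (p+q+m)) ℚ,
        (1 - B) * (1 + B) = 1 ∧ (1 + B) * (1 - B) = 1 ∧
        A = (1 - B) * CC p q m 1 * (1 + B) := by
    intro hgq hgm
    obtain ⟨a1, c1, ha1, hac1⟩ := bezout hp0 q hq0
    obtain ⟨a2, c2, ha2, hac2⟩ := bezout hp0 m hm0
    obtain ⟨x1, hx1s, hx1⟩ := solve_x hp0 hq0 hm0 q (Nat.gcd p q) ((i-1)/(Nat.gcd p q))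
      a1 c1 hac1 (Nat.mul_div_cancel' hgq)
    obtain ⟨x2, hx2s, hx2⟩ := solve_x hp0 hq0 hm0 m (Nat.gcd p m) ((i-1)/(Nat.gcd p m))
      a2 c2 hac2 (Nat.mul_div_cancel' hgm)
    have hwq : hqVec p q m (q-1) ᵥ* CC p q m q = hqVec p q m (q-1) := by
      rw [hqVec_vecMul hp0 hq0 hm0 q (q-1)]
      exact hqVec_congr (Nat.add_mul_mod_self_right (q-1) (q-1) q)
    have hwm : hmVec p q m (m-1) ᵥ* CC p q m m = hmVec p q m (m-1) := by
      rw [hmVec_vecMul hp0 hq0 hm0 m (m-1)]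
      exact hmVec_congr (Nat.add_mul_mod_self_right (m-1) (m-1) m)
    obtain ⟨B1, hB1g, hB1c⟩ := build_B hp0 hq0 hm0 q x1 hx1s hx1 (hqVec p q m (q-1))
      (fun c hc => hqVec_supp _ c hc) hwq
    obtain ⟨B2, hB2g, hB2c⟩ := build_B hp0 hq0 hm0 m x2 hx2s hx2 (hmVec p q m (m-1))
      (fun c hc => hmVec_supp _ c hc) hwm
    have hgood : Good p q m (B1 - B2) := good_sub hB1g hB2g
    have hBB : (B1 - B2) * (B1 - B2) = 0 := good_mul hgood hgood
    refine ⟨B1 - B2, ?_, ?_, ?_⟩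
    · have hh : (1 - (B1-B2)) * (1 + (B1-B2)) = 1 - (B1-B2)*(B1-B2) := by noncomm_ring
      rw [hh, hBB, sub_zero]
    · have hh : (1 + (B1-B2)) * (1 - (B1-B2)) = 1 - (B1-B2)*(B1-B2) := by noncomm_ring
      rw [hh, hBB, sub_zero]
    · have hcomm : CC p q m 1 * (B1-B2) - (B1-B2) * CC p q m 1 = TT p q m i := by
        have hh : CC p q m 1 * (B1-B2) - (B1-B2) * CC p q m 1
            = (CC p q m 1 * B1 - B1 * CC p q m 1) - (CC p q m 1 * B2 - B2 * CC p q m 1) := by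
          noncomm_ring
        rw [hh, hB1c, hB2c, ← vmv_sub_right]
        rfl
      have hBCB : (B1-B2) * CC p q m 1 * (B1-B2) = 0 := good_mul_CC 1 hgood hgood
      rw [hA']
      have hexp : (1 - (B1-B2)) * CC p q m 1 * (1 + (B1-B2))
          = CC p q m 1 + (CC p q m 1 * (B1-B2) - (B1-B2) * CC p q m 1)
            - (B1-B2) * CC p q m 1 * (B1-B2) := by noncomm_ring
      rw [hexp, hcomm, hBCB, sub_zero]
  have hpow : ∀ B : Matrix (Fin (p+q+m)) (Fin (p+q+m)) ℚ,
      (1 - B) * (1 + B) = 1 → (1 + B) * (1 - B) = 1 →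
      A = (1 - B) * CC p q m 1 * (1 + B) →
      ∀ t, A ^ t = (1 - B) * CC p q m t * (1 + B) := by
    intro B hS1 hS2 hAc t
    induction t with
    | zero => rw [pow_zero, CC_zero hp0 hq0 hm0, mul_one, hS1]
    | succ t ih =>
      rw [pow_succ, ih, hAc]
      have hh : (1-B) * CC p q m t * (1+B) * ((1-B) * CC p q m 1 * (1+B))
          = (1-B) * (CC p q m t * ((1+B)*(1-B)) * CC p q m 1) * (1+B) := by noncomm_ring
      rw [hh, hS2, mul_one, CC_mul hp0 hq0 hm0 t 1]
  have hLdvd : p ∣ Nat.lcm (Nat.lcm p q) m ∧ q ∣ Nat.lcm (Nat.lcm p q) m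
      ∧ m ∣ Nat.lcm (Nat.lcm p q) m :=
    ⟨dvd_trans (Nat.dvd_lcm_left p q) (Nat.dvd_lcm_left _ m),
     dvd_trans (Nat.dvd_lcm_right p q) (Nat.dvd_lcm_left _ m),
     Nat.dvd_lcm_right _ m⟩
  have hiff : HasFinOrder A ↔ (Nat.gcd p q ∣ i - 1 ∧ Nat.gcd p m ∣ i - 1) := by
    constructor
    · rintro ⟨t, ht, h1⟩
      obtain ⟨g1, g2, _, _, _⟩ := hforward t ht h1
      exact ⟨g1, g2⟩
    · rintro ⟨hgq, hgm⟩
      obtain ⟨B, hS1, hS2, hAc⟩ := hbackward hgq hgm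
      refine ⟨Nat.lcm (Nat.lcm p q) m, hLpos, ?_⟩
      rw [hpow B hS1 hS2 hAc, (CC_one_iff hp0 hq0 hm0 _).mpr hLdvd, mul_one, hS1]
  refine ⟨hiff, ?_⟩
  intro hfin
  obtain ⟨hgq, hgm⟩ := hiff.mp hfin
  obtain ⟨B, hS1, hS2, hAc⟩ := hbackward hgq hgm
  have hAL : A ^ (Nat.lcm (Nat.lcm p q) m) = 1 := by
    rw [hpow B hS1 hS2 hAc, (CC_one_iff hp0 hq0 hm0 _).mpr hLdvd, mul_one, hS1]
  constructor
  · constructor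
    · exact ⟨hLpos, hAL⟩
    · intro s hs
      obtain ⟨hspos, hs1⟩ := hs
      obtain ⟨_, _, hdp, hdq, hdm⟩ := hforward s hspos hs1
      exact Nat.le_of_dvd hspos (Nat.lcm_dvd (Nat.lcm_dvd hdp hdq) hdm)
  · refine ⟨1 - B, (Matrix.isUnit_iff_isUnit_det _).mpr (Matrix.isUnit_det_of_right_inverse hS1), ?_⟩
    rw [Matrix.inv_eq_right_inv hS1, hCeq, hAc]
    have hh : (1+B) * ((1-B) * CC p q m 1 * (1+B)) * (1-B)
        = ((1+B)*(1-B)) * CC p q m 1 * ((1+B)*(1-B)) := by noncomm_ring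
    rw [hh, hS2, one_mul, mul_one]
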